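/- (Polygon representation of the two-edge correlation.) Let a,b,c > 0, set A = (a−b−c)/(a+b+c), B = (b−a−c)/(a+b+c), C = (c−a−b)/(a+b+c), assume ABC ≠ 0, and let ε_a, ε_b, ε_c ∈ ℂ satisfy ε_b ε_c = A, ε_a ε_c = B, ε_a ε_b = C. Then for any two distinct midpoints e, f ∈ M_n, the polygon partition function satisfies Σ_{π ∈ Π̂_n} W(π) ≠ 0 and the two-edge correlation of the 1-2 model satisfies E_{μ_n}[σ(e)σ(f)] = ( Σ_{π ∈ Π^{e,f}_n} W(π) ) / ( Σ_{π ∈ Π̂_n} W(π) ). -/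

import Mathlib

open MeasureTheory Filter Topology

/-- The three edge types of the hexagonal lattice: `a` (horizontal),
`b` (NW/SE), `c` (NE/SW). -/
inductive EType : Type
  | a : EType
  | b : EType
  | c : EType
deriving DecidableEq

instance : Fintype EType :=
  ⟨{EType.a, EType.b, EType.c}, fun x => by cases x <;> simp⟩

/-- A vertex of the (toroidal or infinite) hexagonal lattice with coordinates in `α`. -/
abbrev HexVtx (α : Type) : Type := (α × α) × Bool

/-- An edge of the hexagonal lattice: its type together with coordinates in `α`. -/
abbrev HexEdge (α : Type) : Type := EType × α × α

/-- The `s`-type edge incident to the vertex `v`. -/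
def edgeAt {α : Type} [Sub α] [One α] (v : HexVtx α) : EType → HexEdge α
  | .a => (.a, v.1)
  | .b => if v.2 then (.b, v.1) else (.b, (v.1.1, v.1.2 - 1))
  | .c => if v.2 then (.c, v.1) else (.c, (v.1.1 - 1, v.1.2))

/-- The two endpoints of an edge. -/
def ends {α : Type} [Add α] [One α] : HexEdge α → HexVtx α × HexVtx α
  | (.a, x, y) => (((x, y), false), ((x, y), true))
  | (.b, x, y) => (((x, y), true), ((x, y + 1), false))
  | (.c, x, y) => (((x, y), true), ((x + 1, y), false))

/-- The 1-2 model vertex weight of a triple of incident edge spins. -/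
def vWt (a b c : ℝ) (sa sb sc : Bool) : ℝ :=
  if sb = sc ∧ sa ≠ sb then a
  else if sa = sc ∧ sb ≠ sa then b
  else if sa = sb ∧ sc ≠ sa then c
  else 0

/-- Vertices of the toroidal lattice `H_n`. -/
abbrev VF (n : ℕ) : Type := HexVtx (ZMod n)

/-- Edges of the toroidal lattice `H_n`. -/
abbrev EF (n : ℕ) : Type := HexEdge (ZMod n)

/-- Spin configurations on the edges of `H_n`; `true` means spin `+1`. -/
abbrev ConfF (n : ℕ) : Type := EF n → Bool

/-- The 1-2 model weight of a configuration on `H_n`. -/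
def confWt (n : ℕ) [NeZero n] (a b c : ℝ) (σ : ConfF n) : ℝ :=
  ∏ v : VF n, vWt a b c (σ (edgeAt v .a)) (σ (edgeAt v .b)) (σ (edgeAt v .c))

/-- The 1-2 model partition function on `H_n`. -/
noncomputable def Zn (n : ℕ) [NeZero n] (a b c : ℝ) : ℝ :=
  ∑ σ : ConfF n, confWt n a b c σ

/-- Vertices of the infinite hexagonal lattice `H`. -/
abbrev VI : Type := HexVtx ℤ

/-- Edges of the infinite hexagonal lattice `H`. -/
abbrev EI : Type := HexEdge ℤ

/-- Configurations on the infinite lattice: the space `Ω = {−1,+1}^𝔼`. -/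
abbrev Config : Type := EI → Bool

/-- Periodic lift of a configuration on `H_n` to the infinite lattice. -/
def liftConf (n : ℕ) (σ : ConfF n) : Config :=
  fun e => σ (e.1, ((e.2.1 : ZMod n), (e.2.2 : ZMod n)))

/-- The pushforward `μ̂_n` on `Ω` of the 1-2 model measure `μ_n` on `H_n`. -/
noncomputable def muHat (n : ℕ) [NeZero n] (a b c : ℝ) : Measure Config :=
  ∑ σ : ConfF n, ENNReal.ofReal (confWt n a b c σ / Zn n a b c) •
    Measure.dirac (liftConf n σ)

/-- `μ` is the weak limit of the sequence `μ̂_n` (tested against all bounded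
continuous functions). -/
def IsWeakLimit (a b c : ℝ) (μ : Measure Config) : Prop :=
  IsProbabilityMeasure μ ∧
    ∀ f : BoundedContinuousFunction Config ℝ,
      Tendsto (fun n : ℕ => ∫ ω, f ω ∂ muHat (n + 1) a b c) atTop (𝓝 (∫ ω, f ω ∂ μ))

/-- The spin value (`±1`) of a Boolean state, as a complex number. -/
def cspin (s : Bool) : ℂ := if s then 1 else -1

/-- The spin-vector weight `w(σ^v, σ^e)` of a pair of vertex and midpoint spin
configurations on `H_n`, with half-edge constants `ε_a, ε_b, ε_c ∈ ℂ`. -/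
noncomputable def spinWt (n : ℕ) [NeZero n] (ε : EType → ℂ)
    (σv : VF n → Bool) (σe : ConfF n) : ℂ :=
  ∏ v : VF n, ∏ s : EType, (1 + ε s * cspin (σv v) * cspin (σe (edgeAt v s)))

/-- The two-edge correlation `E_{μ_n}[σ(e)σ(f)]` of the 1-2 model on `H_n`. -/
noncomputable def corrFin (n : ℕ) [NeZero n] (a b c : ℝ) (e f : EF n) : ℝ :=
  (∑ σ : ConfF n,
      (if σ e then (1 : ℝ) else -1) * (if σ f then (1 : ℝ) else -1) *
        confWt n a b c σ) / Zn n a b c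

/-- A half-edge of the half-edge graph `AH_n`: an edge `g` of `H_n` together
with a Boolean selecting one of its two endpoints; it joins the midpoint of `g`
to that endpoint. -/
abbrev HalfEdge (n : ℕ) : Type := EF n × Bool

/-- The vertex (of `V_n`) at the end of a half-edge. -/
def halfEnd (n : ℕ) (h : HalfEdge n) : VF n :=
  if h.2 then (ends h.1).2 else (ends h.1).1

/-- The weight `W(π) = ε_a^{|π(a)|} ε_b^{|π(b)|} ε_c^{|π(c)|}` of a set of
half-edges. -/
noncomputable def polyWt (n : ℕ) (ε : EType → ℂ) (π : Finset (HalfEdge n)) : ℂ :=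
  ∏ h ∈ π, ε h.1.1

/-- `π ∈ Π̂_n`: every vertex and every midpoint of `AH_n` meets an even number
of half-edges of `π`. -/
def IsPolygonConf (n : ℕ) [NeZero n] (π : Finset (HalfEdge n)) : Prop :=
  (∀ v : VF n, Even (π.filter (fun h => halfEnd n h = v)).card) ∧
    ∀ g : EF n, Even (π.filter (fun h => h.1 = g)).card

/-- `π ∈ Π^{e,f}_n`: every vertex of `AH_n` other than the midpoints `e`, `f`
meets an even number of half-edges of `π`, while `e` and `f` each meet exactly
one. -/
def IsPathConf (n : ℕ) [NeZero n] (e f : EF n) (π : Finset (HalfEdge n)) : Prop :=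
  (∀ v : VF n, Even (π.filter (fun h => halfEnd n h = v)).card) ∧
    (∀ g : EF n, g ≠ e → g ≠ f → Even (π.filter (fun h => h.1 = g)).card) ∧
    (π.filter (fun h => h.1 = e)).card = 1 ∧
    (π.filter (fun h => h.1 = f)).card = 1

open scoped Classical in
/-- The polygon partition function `Σ_{π ∈ Π̂_n} W(π)`. -/
noncomputable def polygonSum (n : ℕ) [NeZero n] (ε : EType → ℂ) : ℂ :=
  ∑ π : Finset (HalfEdge n), if IsPolygonConf n π then polyWt n ε π else 0

open scoped Classical in
/-- The sum `Σ_{π ∈ Π^{e,f}_n} W(π)`. -/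
noncomputable def pathSum (n : ℕ) [NeZero n] (ε : EType → ℂ) (e f : EF n) : ℂ :=
  ∑ π : Finset (HalfEdge n), if IsPathConf n e f π then polyWt n ε π else 0


lemma univ_etype : (Finset.univ : Finset EType) = {EType.a, EType.b, EType.c} := by
  decide

lemma prod_etype (f : EType → ℂ) : ∏ s : EType, f s = f .a * (f .b * f .c) := by
  rw [univ_etype]
  rw [Finset.prod_insert (by decide), Finset.prod_insert (by decide), Finset.prod_singleton]

lemma vertex_id (a b c : ℝ) (habc : (a:ℂ) + b + c ≠ 0)
    (ε : EType → ℂ)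
    (hbc : ε .b * ε .c = (((a - b - c) / (a + b + c) : ℝ) : ℂ))
    (hac : ε .a * ε .c = (((b - a - c) / (a + b + c) : ℝ) : ℂ))
    (hab : ε .a * ε .b = (((c - a - b) / (a + b + c) : ℝ) : ℂ))
    (sa sb sc : Bool) :
    (∑ t : Bool, ∏ s : EType,
      (1 + ε s * cspin t * cspin (match s with | .a => sa | .b => sb | .c => sc))) =
      (8 / ((a:ℂ) + b + c)) * ((vWt a b c sa sb sc : ℝ) : ℂ) := by
  push_cast at hbc hac hab
  have hbc' : ε .b * ε .c * ((a:ℂ)+b+c) = (a:ℂ) - b - c := by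
    rw [hbc]; field_simp
  have hac' : ε .a * ε .c * ((a:ℂ)+b+c) = (b:ℂ) - a - c := by
    rw [hac]; field_simp
  have hab' : ε .a * ε .b * ((a:ℂ)+b+c) = (c:ℂ) - a - b := by
    rw [hab]; field_simp
  rcases sa <;> rcases sb <;> rcases sc <;>
    simp only [Fintype.sum_bool, prod_etype, cspin, vWt, ne_eq, reduceIte, reduceCtorEq,
      Bool.true_eq_false, Bool.false_eq_true, not_true_eq_false, not_false_eq_true,
      and_self, and_true, and_false, true_and, false_and, if_true, if_false] <;>
    push_cast <;> field_simp
  · have h1 : ((a:ℂ)+b+c)/((a:ℂ)+b+c) = 1 := div_self habc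
    linear_combination 2*hab' + 2*hac' + 2*hbc'
  · linear_combination 2*hab' - 2*hac' - 2*hbc'
  · linear_combination -2*hab' + 2*hac' - 2*hbc'
  · linear_combination -2*hab' - 2*hac' + 2*hbc'
  · linear_combination -2*hab' - 2*hac' + 2*hbc'
  · linear_combination -2*hab' + 2*hac' - 2*hbc'
  · linear_combination 2*hab' - 2*hac' - 2*hbc'
  · have h1 : ((a:ℂ)+b+c)/((a:ℂ)+b+c) = 1 := div_self habc
    linear_combination 2*hab' + 2*hac' + 2*hbc'

/-- Bijection between (vertex, type) pairs and half-edges. -/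
def hedgeEquiv (n : ℕ) [NeZero n] : VF n × EType ≃ HalfEdge n where
  toFun p := (edgeAt p.1 p.2, if p.2 = EType.a then p.1.2 else !p.1.2)
  invFun h := (halfEnd n h, h.1.1)
  left_inv := by
    rintro ⟨⟨⟨x, y⟩, u⟩, s⟩
    rcases s <;> rcases u <;>
      simp [edgeAt, halfEnd, ends, sub_add_cancel]
  right_inv := by
    rintro ⟨⟨s, x, y⟩, u⟩
    rcases s <;> rcases u <;>
      simp [edgeAt, halfEnd, ends, add_sub_cancel_right]

lemma hedgeEquiv_symm (n : ℕ) [NeZero n] (h : HalfEdge n) :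
    (hedgeEquiv n).symm h = (halfEnd n h, h.1.1) := rfl

lemma edgeAt_halfEnd (n : ℕ) [NeZero n] (h : HalfEdge n) :
    edgeAt (halfEnd n h) h.1.1 = h.1 :=
  congrArg Prod.fst ((hedgeEquiv n).apply_symm_apply h)

lemma sum_bool_pow (d : ℕ) :
    (∑ t : Bool, cspin t ^ d) = if Even d then 2 else 0 := by
  rcases Nat.even_or_odd d with hd | hd
  · simp [Fintype.sum_bool, cspin, hd, Even.neg_one_pow hd]
  · simp [Fintype.sum_bool, cspin, Nat.not_even_iff_odd.mpr hd, Odd.neg_one_pow hd]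

lemma sum_fun_prod_pow {X : Type*} [Fintype X] [DecidableEq X] (d : X → ℕ) :
    (∑ σ : X → Bool, ∏ x : X, cspin (σ x) ^ d x)
      = ∏ x : X, ((if Even (d x) then 2 else 0) : ℂ) := by
  rw [← Fintype.prod_sum fun x t => cspin t ^ d x]
  exact Finset.prod_congr rfl fun x _ => sum_bool_pow (d x)

lemma fiber_prod {X H : Type*} [Fintype X] [DecidableEq X] [DecidableEq H]
    (π : Finset H) (g : H → X) (σ : X → Bool) :
    (∏ h ∈ π, cspin (σ (g h)))
      = ∏ x : X, cspin (σ x) ^ (π.filter (fun h => g h = x)).card := by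
  rw [← Finset.prod_fiberwise_of_maps_to (fun h _ => Finset.mem_univ (g h))]
  refine Finset.prod_congr rfl fun x _ => ?_
  rw [Finset.prod_congr rfl (fun h hh => by rw [(Finset.mem_filter.mp hh).2]),
    Finset.prod_const]

lemma prod_if_even {X : Type*} [Fintype X] (P : X → Prop) [DecidablePred P] :
    (∏ x : X, (if P x then (2:ℂ) else 0))
      = if ∀ x, P x then (2:ℂ)^(Fintype.card X) else 0 := by
  by_cases h : ∀ x, P x
  · rw [if_pos h, Finset.prod_congr rfl fun x _ => if_pos (h x), Finset.prod_const,
      Finset.card_univ]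
  · rw [if_neg h]
    push_neg at h
    obtain ⟨x, hx⟩ := h
    exact Finset.prod_eq_zero (Finset.mem_univ x) (if_neg hx)

lemma spinWt_eq (n : ℕ) [NeZero n] (ε : EType → ℂ) (σv : VF n → Bool) (σe : ConfF n) :
    spinWt n ε σv σe
      = ∏ h : HalfEdge n, (1 + ε h.1.1 * cspin (σv (halfEnd n h)) * cspin (σe h.1)) := by
  rw [spinWt, ← Finset.prod_product', Finset.univ_product_univ]
  rw [← Equiv.prod_comp (hedgeEquiv n).symm
    (fun p => 1 + ε p.2 * cspin (σv p.1) * cspin (σe (edgeAt p.1 p.2)))]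
  refine Finset.prod_congr rfl fun h _ => ?_
  rw [hedgeEquiv_symm]
  simp only [edgeAt_halfEnd]

open scoped Classical in
lemma key_expansion (n : ℕ) [NeZero n] (ε : EType → ℂ) (D : Finset (EF n)) :
    (∑ σe : ConfF n, ∑ σv : VF n → Bool,
        (∏ g ∈ D, cspin (σe g)) * spinWt n ε σv σe)
      = (2:ℂ) ^ (Fintype.card (VF n) + Fintype.card (EF n)) *
          ∑ π : Finset (HalfEdge n),
            if (∀ v : VF n, Even ((π.filter (fun h => halfEnd n h = v)).card)) ∧
               (∀ g : EF n,
                 Even ((if g ∈ D then 1 else 0) + (π.filter (fun h => h.1 = g)).card))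
            then polyWt n ε π else 0 := by
  have expand : ∀ (σv : VF n → Bool) (σe : ConfF n),
      spinWt n ε σv σe = ∑ π : Finset (HalfEdge n),
        polyWt n ε π * ((∏ h ∈ π, cspin (σv (halfEnd n h))) *
          ∏ h ∈ π, cspin (σe h.1)) := by
    intro σv σe
    rw [spinWt_eq]
    rw [Finset.prod_congr rfl fun h (_ : h ∈ Finset.univ) => (add_comm (1:ℂ)
      (ε h.1.1 * cspin (σv (halfEnd n h)) * cspin (σe h.1)))]
    rw [Fintype.prod_add]
    refine Finset.sum_congr rfl fun π _ => ?_
    rw [Finset.prod_const_one, mul_one, Finset.prod_mul_distrib,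
      Finset.prod_mul_distrib, polyWt, mul_assoc]
  have hPv : ∀ π : Finset (HalfEdge n),
      (∑ σv : VF n → Bool, ∏ h ∈ π, cspin (σv (halfEnd n h)))
        = if (∀ v : VF n, Even ((π.filter (fun h => halfEnd n h = v)).card))
            then (2:ℂ)^(Fintype.card (VF n)) else 0 := by
    intro π
    rw [Finset.sum_congr rfl fun σv _ => fiber_prod π (halfEnd n) σv,
      sum_fun_prod_pow, prod_if_even]
  have hPe : ∀ π : Finset (HalfEdge n),
      (∑ σe : ConfF n, (∏ g ∈ D, cspin (σe g)) * ∏ h ∈ π, cspin (σe h.1))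
        = if (∀ g : EF n,
              Even ((if g ∈ D then 1 else 0) + (π.filter (fun h => h.1 = g)).card))
            then (2:ℂ)^(Fintype.card (EF n)) else 0 := by
    intro π
    have step : ∀ σe : ConfF n,
        (∏ g ∈ D, cspin (σe g)) * ∏ h ∈ π, cspin (σe h.1)
          = ∏ g : EF n, cspin (σe g) ^
              ((if g ∈ D then 1 else 0) + (π.filter (fun h => h.1 = g)).card) := by
      intro σe
      have h1 : (∏ g ∈ D, cspin (σe g))
          = ∏ g : EF n, cspin (σe g) ^ (if g ∈ D then 1 else 0) := by
        rw [Finset.prod_congr rfl fun (g : EF n) (_ : g ∈ Finset.univ) =>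
          (by split_ifs <;> simp :
            cspin (σe g) ^ (if g ∈ D then 1 else 0)
              = if g ∈ D then cspin (σe g) else 1),
          Finset.prod_ite_mem, Finset.univ_inter]
      rw [h1, fiber_prod π (fun h => h.1) σe, ← Finset.prod_mul_distrib]
      exact Finset.prod_congr rfl fun g _ => (pow_add _ _ _).symm
    rw [Finset.sum_congr rfl fun σe _ => step σe, sum_fun_prod_pow, prod_if_even]
  calc
    (∑ σe : ConfF n, ∑ σv : VF n → Bool,
        (∏ g ∈ D, cspin (σe g)) * spinWt n ε σv σe)
      = ∑ π : Finset (HalfEdge n), polyWt n ε π *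
          ((∑ σv : VF n → Bool, ∏ h ∈ π, cspin (σv (halfEnd n h))) *
           (∑ σe : ConfF n, (∏ g ∈ D, cspin (σe g)) * ∏ h ∈ π, cspin (σe h.1))) := by
        simp only [expand, Finset.mul_sum]
        refine (Finset.sum_congr rfl fun σe _ => Finset.sum_comm).trans ?_
        refine Finset.sum_comm.trans ?_
        refine Finset.sum_congr rfl fun π _ => ?_
        simp only [Finset.mul_sum, Finset.sum_mul]
        refine Finset.sum_congr rfl fun σe _ => Finset.sum_congr rfl fun σv _ => ?_
        ring
    _ = _ := by
        rw [Finset.mul_sum]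
        refine Finset.sum_congr rfl fun π _ => ?_
        rw [hPv, hPe]
        by_cases h1 : (∀ v : VF n, Even ((π.filter (fun h => halfEnd n h = v)).card))
        · by_cases h2 : (∀ g : EF n,
              Even ((if g ∈ D then 1 else 0) + (π.filter (fun h => h.1 = g)).card))
          · rw [if_pos h1, if_pos h2, if_pos ⟨h1, h2⟩, pow_add]; ring
          · have hnot : ¬((∀ v : VF n, Even ((π.filter (fun h => halfEnd n h = v)).card)) ∧
                (∀ g : EF n, Even ((if g ∈ D then 1 else 0)
                  + (π.filter (fun h => h.1 = g)).card))) := fun hh => h2 hh.2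
            rw [if_neg h2, if_neg hnot]; ring
        · have hnot : ¬((∀ v : VF n, Even ((π.filter (fun h => halfEnd n h = v)).card)) ∧
              (∀ g : EF n, Even ((if g ∈ D then 1 else 0)
                + (π.filter (fun h => h.1 = g)).card))) := fun hh => h1 hh.1
          rw [if_neg h1, if_neg hnot]; ring

lemma stepA (n : ℕ) [NeZero n] (a b c : ℝ) (habc : (a:ℂ) + b + c ≠ 0)
    (ε : EType → ℂ)
    (hbc : ε .b * ε .c = (((a - b - c) / (a + b + c) : ℝ) : ℂ))
    (hac : ε .a * ε .c = (((b - a - c) / (a + b + c) : ℝ) : ℂ))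
    (hab : ε .a * ε .b = (((c - a - b) / (a + b + c) : ℝ) : ℂ))
    (σe : ConfF n) :
    (∑ σv : VF n → Bool, spinWt n ε σv σe)
      = (8 / ((a:ℂ) + b + c)) ^ (Fintype.card (VF n)) * ((confWt n a b c σe : ℝ) : ℂ) := by
  have swap : (∑ σv : VF n → Bool, spinWt n ε σv σe)
      = ∏ v : VF n, ∑ t : Bool, ∏ s : EType,
          (1 + ε s * cspin t * cspin (σe (edgeAt v s))) := by
    rw [Fintype.prod_sum]
    rfl
  rw [swap]
  have hv : ∀ v : VF n, (∑ t : Bool, ∏ s : EType,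
      (1 + ε s * cspin t * cspin (σe (edgeAt v s))))
        = (8 / ((a:ℂ) + b + c)) *
          ((vWt a b c (σe (edgeAt v .a)) (σe (edgeAt v .b)) (σe (edgeAt v .c)) : ℝ) : ℂ) := by
    intro v
    rw [← vertex_id a b c habc ε hbc hac hab (σe (edgeAt v .a)) (σe (edgeAt v .b))
      (σe (edgeAt v .c))]
    refine Finset.sum_congr rfl fun t _ => Finset.prod_congr rfl fun s _ => ?_
    cases s <;> norm_num
  rw [Finset.prod_congr rfl fun v _ => hv v, Finset.prod_mul_distrib,
    Finset.prod_const, Finset.card_univ, confWt]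
  push_cast
  ring

lemma vWt_nonneg {a b c : ℝ} (ha : 0 < a) (hb : 0 < b) (hc : 0 < c)
    (sa sb sc : Bool) : 0 ≤ vWt a b c sa sb sc := by
  unfold vWt; split_ifs <;> positivity

lemma Zn_pos (n : ℕ) [NeZero n] {a b c : ℝ} (ha : 0 < a) (hb : 0 < b) (hc : 0 < c) :
    0 < Zn n a b c := by
  have h0 : ∀ σ : ConfF n, 0 ≤ confWt n a b c σ := fun σ =>
    Finset.prod_nonneg fun v _ => vWt_nonneg ha hb hc _ _ _
  set σ0 : ConfF n := fun g => decide (g.1 = EType.a) with hσ0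
  have hpos : 0 < confWt n a b c σ0 := by
    rw [confWt]
    refine Finset.prod_pos fun v _ => ?_
    have h1 : σ0 (edgeAt v .a) = true := by
      rcases v with ⟨⟨x, y⟩, u⟩; simp [hσ0, edgeAt]
    have h2 : σ0 (edgeAt v .b) = false := by
      rcases v with ⟨⟨x, y⟩, u⟩; rcases u <;> simp [hσ0, edgeAt]
    have h3 : σ0 (edgeAt v .c) = false := by
      rcases v with ⟨⟨x, y⟩, u⟩; rcases u <;> simp [hσ0, edgeAt]
    rw [h1, h2, h3]
    simpa [vWt] using ha
  calc (0:ℝ) < confWt n a b c σ0 := hpos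
    _ ≤ Zn n a b c := Finset.single_le_sum (fun σ _ => h0 σ) (Finset.mem_univ σ0)

lemma filter_card_le_two (n : ℕ) [NeZero n] (π : Finset (HalfEdge n)) (g : EF n) :
    (π.filter (fun h => h.1 = g)).card ≤ 2 := by
  have hsub : π.filter (fun h => h.1 = g) ⊆ {(g, false), (g, true)} := by
    intro h hh
    obtain ⟨-, h2⟩ := Finset.mem_filter.mp hh
    rcases h with ⟨h1, u⟩
    cases u <;> simp_all
  calc (π.filter (fun h => h.1 = g)).card
      ≤ ({(g, false), (g, true)} : Finset (HalfEdge n)).card := Finset.card_le_card hsub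
    _ ≤ 2 := by
      refine le_trans (Finset.card_insert_le _ _) ?_
      simp

open scoped Classical in
lemma cond_empty_iff (n : ℕ) [NeZero n] (π : Finset (HalfEdge n)) :
    ((∀ v : VF n, Even ((π.filter (fun h => halfEnd n h = v)).card)) ∧
      (∀ g : EF n,
        Even ((if g ∈ (∅ : Finset (EF n)) then 1 else 0)
          + (π.filter (fun h => h.1 = g)).card)))
      ↔ IsPolygonConf n π := by
  unfold IsPolygonConf
  simp

open scoped Classical in
lemma cond_pair_iff (n : ℕ) [NeZero n] (e f : EF n) (hef : e ≠ f)
    (π : Finset (HalfEdge n)) :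
    ((∀ v : VF n, Even ((π.filter (fun h => halfEnd n h = v)).card)) ∧
      (∀ g : EF n,
        Even ((if g ∈ ({e, f} : Finset (EF n)) then 1 else 0)
          + (π.filter (fun h => h.1 = g)).card)))
      ↔ IsPathConf n e f π := by
  unfold IsPathConf
  constructor
  · rintro ⟨h1, h2⟩
    refine ⟨h1, fun g hge hgf => ?_, ?_, ?_⟩
    · have := h2 g
      rw [if_neg (by simp [hge, hgf])] at this
      simpa using this
    · have := h2 e
      rw [if_pos (by simp)] at this
      have hle := filter_card_le_two n π e
      rw [Nat.even_iff] at this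
      omega
    · have := h2 f
      rw [if_pos (by simp)] at this
      have hle := filter_card_le_two n π f
      rw [Nat.even_iff] at this
      omega
  · rintro ⟨h1, h2, h3, h4⟩
    refine ⟨h1, fun g => ?_⟩
    by_cases hge : g = e
    · subst hge; rw [if_pos (by simp), h3]; decide
    · by_cases hgf : g = f
      · subst hgf; rw [if_pos (by simp), h4]; decide
      · rw [if_neg (by simp [hge, hgf])]
        simpa using h2 g hge hgf

lemma cspin_cast (s : Bool) : cspin s = (((if s then (1:ℝ) else -1) : ℝ) : ℂ) := by
  cases s <;> simp [cspin]

/-- polygon representation of the two-edge correlation. -/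
theorem two_edge_correlation_polygon_representation
    (n : ℕ) [NeZero n] (a b c : ℝ) (ha : 0 < a) (hb : 0 < b) (hc : 0 < c)
    (A B C : ℝ)
    (hA : A = (a - b - c) / (a + b + c))
    (hB : B = (b - a - c) / (a + b + c))
    (hC : C = (c - a - b) / (a + b + c))
    (hABC : A * B * C ≠ 0)
    (ε : EType → ℂ)
    (hbc : ε .b * ε .c = (A : ℂ))
    (hac : ε .a * ε .c = (B : ℂ))
    (hab : ε .a * ε .b = (C : ℂ))
    (e f : EF n) (hef : e ≠ f) :
    polygonSum n ε ≠ 0 ∧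
      ((corrFin n a b c e f : ℝ) : ℂ) = pathSum n ε e f / polygonSum n ε := by
  classical
  subst hA hB hC
  have hs : (a:ℂ) + b + c ≠ 0 := by
    have h0 : ((a + b + c : ℝ) : ℂ) ≠ 0 :=
      Complex.ofReal_ne_zero.mpr (ne_of_gt (by linarith))
    push_cast at h0
    exact h0
  set K : ℂ := (8 / ((a:ℂ) + b + c)) ^ (Fintype.card (VF n)) with hKdef
  set M : ℂ := (2:ℂ) ^ (Fintype.card (VF n) + Fintype.card (EF n)) with hMdef
  have hK : K ≠ 0 := pow_ne_zero _ (div_ne_zero (by norm_num) hs)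
  have hM : M ≠ 0 := pow_ne_zero _ (by norm_num)
  have hZ : 0 < Zn n a b c := Zn_pos n ha hb hc
  have hZC : ((Zn n a b c : ℝ) : ℂ) ≠ 0 := Complex.ofReal_ne_zero.mpr (ne_of_gt hZ)
  set NumR : ℝ := ∑ σ : ConfF n,
      (if σ e then (1 : ℝ) else -1) * (if σ f then (1 : ℝ) else -1) *
        confWt n a b c σ with hNumdef
  -- polygon identity
  have hpoly : M * polygonSum n ε = K * ((Zn n a b c : ℝ) : ℂ) := by
    have h1 := key_expansion n ε (∅ : Finset (EF n))
    have h2 : (∑ σe : ConfF n, ∑ σv : VF n → Bool,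
        (∏ g ∈ (∅ : Finset (EF n)), cspin (σe g)) * spinWt n ε σv σe)
          = K * ((Zn n a b c : ℝ) : ℂ) := by
      calc (∑ σe : ConfF n, ∑ σv : VF n → Bool,
          (∏ g ∈ (∅ : Finset (EF n)), cspin (σe g)) * spinWt n ε σv σe)
          = ∑ σe : ConfF n, K * ((confWt n a b c σe : ℝ) : ℂ) := by
            refine Finset.sum_congr rfl fun σe _ => ?_
            rw [Finset.prod_empty,
              Finset.sum_congr rfl fun σv (_ : σv ∈ Finset.univ) => one_mul _,
              stepA n a b c hs ε hbc hac hab σe]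
        _ = K * ((Zn n a b c : ℝ) : ℂ) := by
            rw [← Finset.mul_sum, Zn]
            push_cast
            ring
    have h3 : (∑ π : Finset (HalfEdge n),
        if (∀ v : VF n, Even ((π.filter (fun h => halfEnd n h = v)).card)) ∧
           (∀ g : EF n,
             Even ((if g ∈ (∅ : Finset (EF n)) then 1 else 0)
               + (π.filter (fun h => h.1 = g)).card))
        then polyWt n ε π else 0) = polygonSum n ε := by
      rw [polygonSum]
      exact Finset.sum_congr rfl fun π _ => if_congr (cond_empty_iff n π) rfl rfl
    rw [← h3, ← h1, h2]
  -- path identity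
  have hpath : M * pathSum n ε e f = K * ((NumR : ℝ) : ℂ) := by
    have h1 := key_expansion n ε ({e, f} : Finset (EF n))
    have h2 : (∑ σe : ConfF n, ∑ σv : VF n → Bool,
        (∏ g ∈ ({e, f} : Finset (EF n)), cspin (σe g)) * spinWt n ε σv σe)
          = K * ((NumR : ℝ) : ℂ) := by
      calc (∑ σe : ConfF n, ∑ σv : VF n → Bool,
          (∏ g ∈ ({e, f} : Finset (EF n)), cspin (σe g)) * spinWt n ε σv σe)
          = ∑ σe : ConfF n, cspin (σe e) * cspin (σe f) *
              (K * ((confWt n a b c σe : ℝ) : ℂ)) := by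
            refine Finset.sum_congr rfl fun σe _ => ?_
            rw [← Finset.mul_sum, stepA n a b c hs ε hbc hac hab σe,
              Finset.prod_pair hef]
        _ = K * ((NumR : ℝ) : ℂ) := by
            rw [hNumdef]
            push_cast
            rw [Finset.mul_sum]
            refine Finset.sum_congr rfl fun σe _ => ?_
            rw [cspin_cast (σe e), cspin_cast (σe f)]
            ring
    have h3 : (∑ π : Finset (HalfEdge n),
        if (∀ v : VF n, Even ((π.filter (fun h => halfEnd n h = v)).card)) ∧
           (∀ g : EF n,
             Even ((if g ∈ ({e, f} : Finset (EF n)) then 1 else 0)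
               + (π.filter (fun h => h.1 = g)).card))
        then polyWt n ε π else 0) = pathSum n ε e f := by
      rw [pathSum]
      exact Finset.sum_congr rfl fun π _ => if_congr (cond_pair_iff n e f hef π) rfl rfl
    rw [← h3, ← h1, h2]
  have hpoly_ne : polygonSum n ε ≠ 0 := by
    intro h0
    rw [h0, mul_zero] at hpoly
    exact mul_ne_zero hK hZC hpoly.symm
  refine ⟨hpoly_ne, ?_⟩
  have hkey : ((NumR : ℝ) : ℂ) * polygonSum n ε
      = pathSum n ε e f * ((Zn n a b c : ℝ) : ℂ) := by
    apply mul_left_cancel₀ hM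
    calc M * (((NumR : ℝ) : ℂ) * polygonSum n ε)
        = ((NumR : ℝ) : ℂ) * (M * polygonSum n ε) := by ring
      _ = ((NumR : ℝ) : ℂ) * (K * ((Zn n a b c : ℝ) : ℂ)) := by rw [hpoly]
      _ = (K * ((NumR : ℝ) : ℂ)) * ((Zn n a b c : ℝ) : ℂ) := by ring
      _ = (M * pathSum n ε e f) * ((Zn n a b c : ℝ) : ℂ) := by rw [hpath]
      _ = M * (pathSum n ε e f * ((Zn n a b c : ℝ) : ℂ)) := by ring
  rw [corrFin, ← hNumdef]
  push_cast
  rw [div_eq_div_iff hZC hpoly_ne]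
  exact_mod_cast hkey
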